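/- Let k be an even integer and t an even integer with 0 < t < k. Let H = (V,E) be a k-uniform hypergraph with n vertices, m ≥ 1 edges, and minimum degree δ. Then there exists a sign function ε : E → {−1, 1} such that, with λ the least element of the set {k·∑_{e∈E} ε(e)·∏_{i∈e} x_i : x ∈ ℝ^V, ∑_{i∈V} x_i^k = 1} (the minimum H-eigenvalue of the corresponding signed adjacency tensor of H), the t-independence number satisfies α_t(H) ≤ t(km − nλ)·(−λ)^{t/(k−t)} / ( (k−t)·δ^{k/(k−t)} + (kδ − tλ)·(−λ)^{t/(k−t)} ). -/

import Mathlib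

lemma rayleigh_aux {V : Type*} [Fintype V] (k : ℕ) (hk : 0 < k)
    (E : Finset (Finset V)) (hcard : ∀ e ∈ E, e.card = k)
    (ε : Finset V → ℝ) (lam : ℝ)
    (hlam : IsLeast {y : ℝ | ∃ x : V → ℝ, ∑ i, x i ^ k = 1 ∧
      y = k * ∑ e ∈ E, ε e * ∏ i ∈ e, x i} lam)
    (x : V → ℝ) (hx : 0 < ∑ i, x i ^ k) :
    lam * ∑ i, x i ^ k ≤ k * ∑ e ∈ E, ε e * ∏ i ∈ e, x i := by
  set s := ∑ i, x i ^ k with hs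
  set c : ℝ := s ^ (-(1:ℝ)/k) with hc
  have hcpos : 0 < c := Real.rpow_pos_of_pos hx _
  have hck : c ^ k = s⁻¹ := by
    rw [← Real.rpow_natCast c k, hc, ← Real.rpow_mul hx.le]
    rw [show (-(1:ℝ)/k) * (k:ℝ) = -1 by field_simp]
    exact Real.rpow_neg_one s
  have hmem : (k : ℝ) * ∑ e ∈ E, ε e * ∏ i ∈ e, (c * x i) ∈
      {y : ℝ | ∃ x : V → ℝ, ∑ i, x i ^ k = 1 ∧
        y = k * ∑ e ∈ E, ε e * ∏ i ∈ e, x i} := by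
    refine ⟨fun i => c * x i, ?_, rfl⟩
    simp only [mul_pow, ← Finset.mul_sum, hck]
    exact inv_mul_cancel₀ hx.ne'
  have hle := hlam.2 hmem
  have hprod : ∀ e ∈ E, ∏ i ∈ e, (c * x i) = s⁻¹ * ∏ i ∈ e, x i := by
    intro e he
    rw [Finset.prod_mul_distrib, Finset.prod_const, hcard e he, hck]
  have heq : (k : ℝ) * ∑ e ∈ E, ε e * ∏ i ∈ e, (c * x i)
      = s⁻¹ * ((k:ℝ) * ∑ e ∈ E, ε e * ∏ i ∈ e, x i) := by
    rw [Finset.sum_congr rfl fun e he => by rw [hprod e he]]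
    rw [show ∑ e ∈ E, ε e * (s⁻¹ * ∏ i ∈ e, x i) = s⁻¹ * ∑ e ∈ E, ε e * ∏ i ∈ e, x i by
      rw [Finset.mul_sum]; exact Finset.sum_congr rfl fun e _ => by ring]
    ring
  rw [heq] at hle
  rw [mul_comm lam s, ← le_div_iff₀' hx]
  calc lam ≤ s⁻¹ * ((k:ℝ) * ∑ e ∈ E, ε e * ∏ i ∈ e, x i) := hle
    _ = ((k:ℝ) * ∑ e ∈ E, ε e * ∏ i ∈ e, x i) / s := by rw [div_eq_inv_mul]

set_option maxHeartbeats 1000000 in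
theorem hoffman_bound_even_hypergraph_signed
    {V : Type*} [Fintype V] [DecidableEq V]
    (k t : ℕ) (hk : Even k) (ht : Even t) (ht0 : 0 < t) (htk : t < k)
    (E : Finset (Finset V)) (huniform : ∀ e ∈ E, e.card = k) (hm : 1 ≤ E.card)
    (δ : ℕ) (hδ : IsLeast (Set.range fun i : V => (E.filter fun e => i ∈ e).card) δ)
    (α : ℕ)
    (hα : IsGreatest {c : ℕ | ∃ S : Finset V,
      (∀ e ∈ E, (e ∩ S).card = 0 ∨ (e ∩ S).card = t) ∧ S.card = c} α) :
    ∃ ε : Finset V → ℝ, (∀ e ∈ E, ε e = 1 ∨ ε e = -1) ∧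
      ∀ lam : ℝ,
        IsLeast {y : ℝ | ∃ x : V → ℝ, ∑ i, x i ^ k = 1 ∧
          y = k * ∑ e ∈ E, ε e * ∏ i ∈ e, x i} lam →
        (α : ℝ) ≤ t * (k * E.card - Fintype.card V * lam) * (-lam) ^ ((t : ℝ) / (k - t)) /
          ((k - t) * (δ : ℝ) ^ ((k : ℝ) / (k - t)) +
            (k * δ - t * lam) * (-lam) ^ ((t : ℝ) / (k - t))) := by
  classical
  obtain ⟨⟨S, hS, hScard⟩, -⟩ := hα
  subst hScard
  have hk0 : 0 < k := lt_trans ht0 htk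
  obtain ⟨e0, he0⟩ := Finset.card_pos.mp (lt_of_lt_of_le one_pos hm)
  have he0k : e0.card = k := huniform e0 he0
  set ε : Finset V → ℝ := fun e => if (e ∩ S).card = t then (-1:ℝ) else 1 with hε
  refine ⟨ε, fun e _ => by by_cases h : (e ∩ S).card = t <;> simp [hε, h], ?_⟩
  intro lam hlam
  -- ### step 1 : lam ≤ -1
  obtain ⟨v0, hv0⟩ : e0.Nonempty := by rw [← Finset.card_pos, he0k]; exact hk0
  have hεe0 : ε e0 = 1 ∨ ε e0 = -1 := by by_cases h : (e0 ∩ S).card = t <;> simp [hε, h]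
  set x0 : V → ℝ := fun i => if i = v0 then -ε e0 else if i ∈ e0 then 1 else 0 with hx0
  have hx0pow : ∀ i, x0 i ^ k = if i ∈ e0 then 1 else 0 := by
    intro i
    by_cases h1 : i = v0
    · subst h1
      simp only [hx0, if_pos rfl, if_pos hv0]
      rw [hk.neg_pow]
      rcases hεe0 with h | h <;> rw [h] <;> simp [hk.neg_one_pow]
    · by_cases h2 : i ∈ e0 <;> simp [hx0, h1, h2, zero_pow hk0.ne']
  have hx0sum : ∑ i, x0 i ^ k = (k:ℝ) := by
    simp only [hx0pow]
    rw [Finset.sum_ite_mem, Finset.univ_inter, Finset.sum_const, he0k]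
    simp
  have hprod_e0 : ∏ i ∈ e0, x0 i = -ε e0 := by
    rw [← Finset.mul_prod_erase e0 x0 hv0]
    have h1 : ∏ i ∈ e0.erase v0, x0 i = 1 := by
      apply Finset.prod_eq_one
      intro i hi
      have h2 := Finset.mem_erase.mp hi
      simp [hx0, h2.1, h2.2]
    rw [h1, mul_one]
    simp [hx0]
  have hsum0 : ∑ e ∈ E, ε e * ∏ i ∈ e, x0 i = -1 := by
    rw [Finset.sum_eq_single_of_mem e0 he0]
    · rw [hprod_e0]
      rcases hεe0 with h | h <;> rw [h] <;> norm_num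
    · intro e he hne
      have hsub : ¬ e ⊆ e0 := fun hsub =>
        hne (Finset.eq_of_subset_of_card_le hsub (by rw [he0k, huniform e he]))
      obtain ⟨i, hie, hie0⟩ := Finset.not_subset.mp hsub
      have hi0 : x0 i = 0 := by
        have : i ≠ v0 := fun h => hie0 (h ▸ hv0)
        simp [hx0, this, hie0]
      rw [Finset.prod_eq_zero hie hi0, mul_zero]
  have hray0 := rayleigh_aux k hk0 E huniform ε lam hlam x0 (by rw [hx0sum]; positivity)
  rw [hx0sum, hsum0] at hray0
  have hkR : (0:ℝ) < (k:ℝ) := by positivity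
  have hlam1 : lam ≤ -1 := by nlinarith [hray0]
  have hu : (0:ℝ) < -lam := by linarith
  -- ### casts and basic positivity
  have hlamne : lam ≠ 0 := by intro h; rw [h] at hlam1; norm_num at hlam1
  have hktR : (0:ℝ) < (k:ℝ) - t := by
    have : (t:ℝ) < k := by exact_mod_cast htk
    linarith
  have htR : (0:ℝ) < (t:ℝ) := by exact_mod_cast ht0
  have hδ0 : (0:ℝ) ≤ (δ:ℝ) := Nat.cast_nonneg δ
  set q : ℝ := (δ:ℝ) / (-lam) with hqdef
  have hq0 : 0 ≤ q := div_nonneg hδ0 hu.le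
  set a : ℝ := q ^ ((1:ℝ)/((k:ℝ)-t)) with ha
  have ha0 : 0 ≤ a := Real.rpow_nonneg hq0 _
  have hak : a ^ k = q ^ ((k:ℝ)/((k:ℝ)-t)) := by
    rw [← Real.rpow_natCast a k, ha, ← Real.rpow_mul hq0]
    rw [show (1/((k:ℝ)-t)) * (k:ℝ) = (k:ℝ)/((k:ℝ)-t) by ring]
  have hat : a ^ t = q ^ ((t:ℝ)/((k:ℝ)-t)) := by
    rw [← Real.rpow_natCast a t, ha, ← Real.rpow_mul hq0]
    rw [show (1/((k:ℝ)-t)) * (t:ℝ) = (t:ℝ)/((k:ℝ)-t) by ring]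
  have hexp : (k:ℝ)/((k:ℝ)-t) = (t:ℝ)/((k:ℝ)-t) + 1 := by field_simp; ring
  have hH3 : (-lam) * a ^ k = (δ:ℝ) * a ^ t := by
    rcases eq_or_lt_of_le hδ0 with h0 | hpos
    · have hq : q = 0 := by rw [hqdef, ← h0]; simp
      rw [hak, hat, hq, Real.zero_rpow (by positivity : (k:ℝ)/((k:ℝ)-t) ≠ 0),
        Real.zero_rpow (by positivity : (t:ℝ)/((k:ℝ)-t) ≠ 0), ← h0]
      ring
    · have hqpos : 0 < q := div_pos hpos hu
      have hql : (-lam) * q = (δ:ℝ) := by rw [hqdef]; field_simp [hlamne]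
      rw [hak, hat, hexp, Real.rpow_add hqpos, Real.rpow_one]
      calc (-lam) * (q ^ ((t:ℝ)/((k:ℝ)-t)) * q)
          = q ^ ((t:ℝ)/((k:ℝ)-t)) * ((-lam) * q) := by ring
        _ = (δ:ℝ) * q ^ ((t:ℝ)/((k:ℝ)-t)) := by rw [hql]; ring
  have hH4 : (δ:ℝ) * a ^ t * (-lam) ^ ((t:ℝ)/((k:ℝ)-t)) = (δ:ℝ) ^ ((k:ℝ)/((k:ℝ)-t)) := by
    rcases eq_or_lt_of_le hδ0 with h0 | hpos
    · rw [← h0, Real.zero_rpow (by positivity : (k:ℝ)/((k:ℝ)-t) ≠ 0)]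
      ring
    · have hqpos : 0 < q := div_pos hpos hu
      rw [hat, mul_assoc, ← Real.mul_rpow hq0 hu.le,
        show q * (-lam) = (δ:ℝ) by rw [hqdef]; field_simp [hlamne]]
      rw [hexp, Real.rpow_add hpos, Real.rpow_one]
      ring
  -- ### step 2 : the main test vector
  set n := Fintype.card V with hn
  have hαle : S.card ≤ n := Finset.card_le_univ S
  have hαlt : S.card < n := by
    rcases lt_or_eq_of_le hαle with h | h
    · exact h
    · exfalso
      have hSuniv : S = Finset.univ := Finset.eq_univ_of_card S h
      have := hS e0 he0
      rw [hSuniv, Finset.inter_univ, he0k] at this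
      omega
  set x1 : V → ℝ := fun i => if i ∈ S then a else 1 with hx1
  have hx1sum : ∑ i, x1 i ^ k = S.card * a ^ k + ((n:ℝ) - S.card) := by
    have h1 : ∀ i, x1 i ^ k = if i ∈ S then a ^ k else 1 := by
      intro i; by_cases h : i ∈ S <;> simp [hx1, h]
    rw [Finset.sum_congr rfl fun i _ => h1 i, Finset.sum_ite, Finset.sum_const,
      Finset.sum_const]
    rw [Finset.filter_mem_eq_inter, Finset.univ_inter]
    have h2 : (Finset.univ.filter fun i => i ∉ S).card = n - S.card := by
      rw [Finset.filter_not, Finset.filter_mem_eq_inter, Finset.univ_inter]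
      rw [Finset.card_sdiff_of_subset (Finset.subset_univ S), Finset.card_univ]
    rw [h2]
    simp only [nsmul_eq_mul, mul_one]
    rw [Nat.cast_sub hαle]
  have hx1sumpos : 0 < ∑ i, x1 i ^ k := by
    rw [hx1sum]
    have h1 : (1:ℝ) ≤ (n:ℝ) - S.card := by
      have : (S.card:ℝ) + 1 ≤ n := by exact_mod_cast hαlt
      linarith
    nlinarith [sq_nonneg a, pow_nonneg ha0 k, mul_nonneg (Nat.cast_nonneg S.card : (0:ℝ) ≤ S.card) (pow_nonneg ha0 k)]
  have hprodx1 : ∀ e ∈ E, ∏ i ∈ e, x1 i = a ^ (e ∩ S).card := by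
    intro e _
    rw [hx1]
    rw [Finset.prod_ite_mem, Finset.prod_const]
  have hedge : ∀ e ∈ E, (t:ℝ) * (ε e * ∏ i ∈ e, x1 i)
      = t - ((e ∩ S).card : ℝ) * (1 + a ^ t) := by
    intro e he
    rw [hprodx1 e he]
    rcases hS e he with h | h
    · have hne : (e ∩ S).card ≠ t := by omega
      rw [h]
      simp [hε, hne]
    · rw [h]
      simp only [hε, if_pos h]
      push_cast
      ring
  -- double counting
  have hdc : (S.card:ℝ) * δ ≤ ∑ e ∈ E, ((e ∩ S).card : ℝ) := by
    have h1 : ∑ e ∈ E, (e ∩ S).card = ∑ i ∈ S, (E.filter fun e => i ∈ e).card := by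
      have h2 : ∀ e, (e ∩ S).card = ∑ i ∈ S, if i ∈ e then 1 else 0 := by
        intro e
        rw [← Finset.card_filter]
        congr 1
        rw [Finset.filter_mem_eq_inter, Finset.inter_comm]
      rw [Finset.sum_congr rfl fun e _ => h2 e, Finset.sum_comm]
      exact Finset.sum_congr rfl fun i _ => (Finset.card_filter _ _).symm
    have h3 : S.card * δ ≤ ∑ e ∈ E, (e ∩ S).card := by
      rw [h1]
      calc S.card * δ = ∑ _i ∈ S, δ := by rw [Finset.sum_const, smul_eq_mul]
        _ ≤ _ := Finset.sum_le_sum fun i _ => hδ.2 ⟨i, rfl⟩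
    exact_mod_cast h3
  have h1at : (0:ℝ) ≤ 1 + a ^ t := by positivity
  have hTP : (t:ℝ) * ∑ e ∈ E, ε e * ∏ i ∈ e, x1 i
      ≤ t * E.card - (S.card * δ) * (1 + a ^ t) := by
    rw [Finset.mul_sum, Finset.sum_congr rfl hedge, Finset.sum_sub_distrib,
      Finset.sum_const, ← Finset.sum_mul]
    have := mul_le_mul_of_nonneg_right hdc h1at
    simp only [nsmul_eq_mul]
    linarith
  have hray1 := rayleigh_aux k hk0 E huniform ε lam hlam x1 hx1sumpos
  -- ### step 3 : combine
  set A : ℝ := (S.card : ℝ) with hA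
  have hA0 : 0 ≤ A := Nat.cast_nonneg _
  have hmain : A * ((k:ℝ) * δ + t * (-lam) + ((k:ℝ) - t) * ((δ:ℝ) * a ^ t))
      ≤ (t:ℝ) * ((k:ℝ) * E.card + n * (-lam)) := by
    have hF2 : (t:ℝ) * (lam * (A * a ^ k + ((n:ℝ) - A)))
        ≤ (k:ℝ) * ((t:ℝ) * E.card - (A * δ) * (1 + a ^ t)) := by
      have h5 : lam * (A * a ^ k + ((n:ℝ) - A)) ≤ (k:ℝ) * ∑ e ∈ E, ε e * ∏ i ∈ e, x1 i := by
        rw [← hx1sum]; exact hray1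
      have h6 := mul_le_mul_of_nonneg_left h5 htR.le
      calc (t:ℝ) * (lam * (A * a ^ k + ((n:ℝ) - A)))
          ≤ (t:ℝ) * ((k:ℝ) * ∑ e ∈ E, ε e * ∏ i ∈ e, x1 i) := h6
        _ = (k:ℝ) * ((t:ℝ) * ∑ e ∈ E, ε e * ∏ i ∈ e, x1 i) := by ring
        _ ≤ (k:ℝ) * ((t:ℝ) * E.card - (A * δ) * (1 + a ^ t)) :=
            mul_le_mul_of_nonneg_left hTP hkR.le
    have hH3' : (t:ℝ) * A * ((-lam) * a ^ k) = (t:ℝ) * A * ((δ:ℝ) * a ^ t) := by rw [hH3]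
    nlinarith [hF2, hH3']
  have hD0pos : 0 < (k:ℝ) * δ + t * (-lam) + ((k:ℝ) - t) * ((δ:ℝ) * a ^ t) := by
    have h7 : 0 ≤ (k:ℝ) * δ := by positivity
    have h8 : 0 < (t:ℝ) * (-lam) := mul_pos htR hu
    have h9 : 0 ≤ ((k:ℝ) - t) * ((δ:ℝ) * a ^ t) :=
      mul_nonneg hktR.le (mul_nonneg hδ0 (pow_nonneg ha0 t))
    linarith
  have hW : (0:ℝ) < (-lam) ^ ((t:ℝ)/((k:ℝ)-t)) := Real.rpow_pos_of_pos hu _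
  have hkey : A ≤ (t:ℝ) * ((k:ℝ) * E.card + n * (-lam)) /
      ((k:ℝ) * δ + t * (-lam) + ((k:ℝ) - t) * ((δ:ℝ) * a ^ t)) :=
    (le_div_iff₀ hD0pos).2 hmain
  have hfinal : (t:ℝ) * ((k:ℝ) * E.card + n * (-lam)) /
      ((k:ℝ) * δ + t * (-lam) + ((k:ℝ) - t) * ((δ:ℝ) * a ^ t))
      = t * ((k:ℝ) * E.card - n * lam) * (-lam) ^ ((t : ℝ) / ((k:ℝ) - t)) /
          (((k:ℝ) - t) * (δ : ℝ) ^ ((k : ℝ) / ((k:ℝ) - t)) +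
            ((k:ℝ) * δ - t * lam) * (-lam) ^ ((t : ℝ) / ((k:ℝ) - t))) := by
    rw [show ((k:ℝ) - t) * (δ : ℝ) ^ ((k : ℝ) / ((k:ℝ) - t)) +
            ((k:ℝ) * δ - t * lam) * (-lam) ^ ((t : ℝ) / ((k:ℝ) - t))
        = ((k:ℝ) * δ + t * (-lam) + ((k:ℝ) - t) * ((δ:ℝ) * a ^ t))
            * (-lam) ^ ((t : ℝ) / ((k:ℝ) - t)) by rw [← hH4]; ring]
    rw [show t * ((k:ℝ) * E.card - n * lam) * (-lam) ^ ((t : ℝ) / ((k:ℝ) - t))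
        = ((t:ℝ) * ((k:ℝ) * E.card + n * (-lam))) * (-lam) ^ ((t : ℝ) / ((k:ℝ) - t)) by ring]
    rw [mul_div_mul_right _ _ hW.ne']
  calc A ≤ _ := hkey
    _ = _ := hfinal
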